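/- Let X = X₁ × ⋯ × X_n with |X_i| ≥ 2, let 1 ≤ k ≤ n, and let A ∈ ℝ^{a×X} have rows spanning V_k(X). Let Y = Y₁ × ⋯ × Y_m with |Y_j| ≥ 2, let Λ' be an inclusion-closed family of subsets of [m], and let B ∈ ℝ^{b×Y} have rows spanning V_{Λ'}(Y), so rank B = 1 + ∑_{λ'∈Λ'∖{∅}} ∏_{j∈λ'}(|Y_j|−1). If X contains rank(B) pairwise disjoint radius-k Hamming balls, then max_{θ∈ℝ^{ab}} rank(𝒜_θ) = rank(A)·rank(B). -/

import Mathlib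

open scoped Classical BigOperators

/-- `V_Λ(X)`: the span of all functions on `X = ∏ i, X_i` that depend only on the
coordinates `x_λ` for some `λ ∈ Λ`. -/
noncomputable def VLam (n : ℕ) (q : Fin n → ℕ) (Λ : Finset (Finset (Fin n))) :
    Submodule ℝ ((∀ i, Fin (q i)) → ℝ) :=
  Submodule.span ℝ
    {f : (∀ i, Fin (q i)) → ℝ | ∃ s ∈ Λ,
      ∀ x x' : ∀ i, Fin (q i), (∀ i ∈ s, x i = x' i) → f x = f x'}

/-- `V_k(X)`: the span of all functions on `X = ∏ i, X_i` depending on at most `k`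
coordinates. -/
noncomputable def Vk (n : ℕ) (q : Fin n → ℕ) (k : ℕ) :
    Submodule ℝ ((∀ i, Fin (q i)) → ℝ) :=
  Submodule.span ℝ
    {f : (∀ i, Fin (q i)) → ℝ | ∃ s : Finset (Fin n), s.card ≤ k ∧
      ∀ x x' : ∀ i, Fin (q i), (∀ i ∈ s, x i = x' i) → f x = f x'}

/-- The argmax (inference) set `h_θ(x) = argmax_{y} ⟨θ, A_x ⊗ B_y⟩`. -/
noncomputable def infSet {a bn : ℕ} {X Y : Type*} [Fintype Y]
    (A : Matrix (Fin a) X ℝ) (B : Matrix (Fin bn) Y ℝ)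
    (θ : Fin a × Fin bn → ℝ) (x : X) : Finset Y :=
  Finset.univ.filter (fun y : Y => ∀ y' : Y,
    ∑ s : Fin a × Fin bn, θ s * (A s.1 x * B s.2 y') ≤
      ∑ s : Fin a × Fin bn, θ s * (A s.1 x * B s.2 y))

/-- The tropical morphism matrix `𝒜_θ` with columns
`A_x ⊗ ((1/|h_θ(x)|) ∑_{y ∈ h_θ(x)} B_y)`. -/
noncomputable def tropMat {a bn : ℕ} {X Y : Type*} [Fintype Y]
    (A : Matrix (Fin a) X ℝ) (B : Matrix (Fin bn) Y ℝ)
    (θ : Fin a × Fin bn → ℝ) : Matrix (Fin a × Fin bn) X ℝ :=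
  fun p x =>
    A p.1 x * (((infSet A B θ x).card : ℝ)⁻¹ * ∑ y ∈ infSet A B θ x, B p.2 y)


noncomputable section AuxTrop

open Finset Submodule

set_option linter.unusedSectionVars false
set_option linter.unnecessarySeqFocus false

variable {ι : Type*} [Fintype ι] [DecidableEq ι] {q : ι → ℕ}

/-- disagreement support of `x` w.r.t. the center `c` -/
def suppc (c x : ∀ i, Fin (q i)) : Finset ι := Finset.univ.filter (fun i => x i ≠ c i)

lemma mem_suppc {c x : ∀ i, Fin (q i)} {i : ι} : i ∈ suppc c x ↔ x i ≠ c i := by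
  simp [suppc]

lemma suppc_card_eq_hammingDist (c x : ∀ i, Fin (q i)) :
    (suppc c x).card = hammingDist x c := rfl

lemma eq_center_of_not_mem_suppc {c x : ∀ i, Fin (q i)} {i : ι} (h : i ∉ suppc c x) :
    x i = c i := by
  by_contra hne
  exact h (mem_suppc.2 hne)

/-- basic indicator-product function -/
def chi (c w : ∀ i, Fin (q i)) : (∀ i, Fin (q i)) → ℝ :=
  fun z => ∏ i ∈ suppc c w, (if z i = w i then (1 : ℝ) else 0)

lemma chi_eq_ite (c w z : ∀ i, Fin (q i)) :
    chi c w z = if (∀ i ∈ suppc c w, z i = w i) then (1 : ℝ) else 0 :=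
  by simp only [chi, Finset.prod_boole]; split_ifs <;> rfl

lemma chi_self (c w : ∀ i, Fin (q i)) : chi c w w = 1 := by
  rw [chi_eq_ite, if_pos]
  intro i _; rfl

lemma chi_cases (c w z : ∀ i, Fin (q i)) : chi c w z = 0 ∨ chi c w z = 1 := by
  rw [chi_eq_ite]
  by_cases h : ∀ i ∈ suppc c w, z i = w i
  · right; rw [if_pos h]
  · left; rw [if_neg h]

lemma chi_eq_one_iff {c w z : ∀ i, Fin (q i)} :
    chi c w z = 1 ↔ ∀ i ∈ suppc c w, z i = w i := by
  rw [chi_eq_ite]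
  by_cases h : ∀ i ∈ suppc c w, z i = w i
  · simp [h]
  · simp [h]

lemma chi_nonneg (c w z : ∀ i, Fin (q i)) : 0 ≤ chi c w z := by
  rcases chi_cases c w z with h | h <;> rw [h] <;> norm_num

lemma chi_le_one (c w z : ∀ i, Fin (q i)) : chi c w z ≤ 1 := by
  rcases chi_cases c w z with h | h <;> rw [h] <;> norm_num

/-- triangularity of evaluation -/
lemma chi_triangle {c w w' : ∀ i, Fin (q i)} (h : chi c w w' = 1) :
    (suppc c w).card < (suppc c w').card ∨ w = w' := by
  have hag : ∀ i ∈ suppc c w, w' i = w i := chi_eq_one_iff.1 h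
  have hsub : suppc c w ⊆ suppc c w' := by
    intro i hi
    have hxi := mem_suppc.1 hi
    rw [mem_suppc, hag i hi]
    exact hxi
  rcases lt_or_ge (suppc c w).card (suppc c w').card with hlt | hge
  · exact Or.inl hlt
  · right
    have heq : suppc c w = suppc c w' := Finset.eq_of_subset_of_card_le hsub hge
    funext i
    by_cases hi : i ∈ suppc c w
    · exact (hag i hi).symm
    · rw [eq_center_of_not_mem_suppc hi,
        eq_center_of_not_mem_suppc (by rw [← heq]; exact hi : i ∉ suppc c w')]

variable (q) in
/-- canonical points for a support family -/
def PTt (c : ∀ i, Fin (q i)) (MP : Finset ι → Prop) : Type _ :=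
  {w : ∀ i, Fin (q i) // MP (suppc c w)}

noncomputable instance (c : ∀ i, Fin (q i)) (MP : Finset ι → Prop) : Fintype (PTt q c MP) := by
  unfold PTt; infer_instance

/-- forward (lower-triangular) evaluation lemma -/
lemma eval_zero_forward (c : ∀ i, Fin (q i)) (MP : Finset ι → Prop)
    (g : PTt q c MP → ℝ)
    (h : ∀ w' : PTt q c MP, ∑ w : PTt q c MP, g w * chi c w.val w'.val = 0) :
    ∀ w, g w = 0 := by
  suffices H : ∀ N : ℕ, ∀ w : PTt q c MP, (suppc c w.val).card ≤ N → g w = 0 by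
    exact fun w => H _ w le_rfl
  intro N
  induction N using Nat.strong_induction_on with
  | _ N ih =>
    intro w hw
    have hsum := h w
    rw [Finset.sum_eq_single w] at hsum
    · rw [chi_self, mul_one] at hsum; exact hsum
    · intro w' _ hne
      rcases chi_cases c w'.val w.val with h0 | h1
      · rw [h0, mul_zero]
      · rcases chi_triangle h1 with hlt | heq
        · have : g w' = 0 := by
            rcases N with _ | N
            · omega
            · exact ih N (Nat.lt_succ_self N) w' (by omega)
          rw [this, zero_mul]
        · exact absurd (Subtype.ext heq) hne
    · intro hmem; exact absurd (Finset.mem_univ w) hmem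

/-- backward (upper-triangular) evaluation lemma -/
lemma eval_zero_backward (c : ∀ i, Fin (q i)) (MP : Finset ι → Prop)
    (g : PTt q c MP → ℝ)
    (h : ∀ w' : PTt q c MP, ∑ w : PTt q c MP, g w * chi c w'.val w.val = 0) :
    ∀ w, g w = 0 := by
  suffices H : ∀ N : ℕ, ∀ w : PTt q c MP, Fintype.card ι - (suppc c w.val).card ≤ N → g w = 0 by
    exact fun w => H _ w le_rfl
  intro N
  induction N using Nat.strong_induction_on with
  | _ N ih =>
    intro w hw
    have hsum := h w
    rw [Finset.sum_eq_single w] at hsum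
    · rw [chi_self, mul_one] at hsum; exact hsum
    · intro w' _ hne
      rcases chi_cases c w.val w'.val with h0 | h1
      · rw [h0, mul_zero]
      · rcases chi_triangle h1 with hlt | heq
        · have hcard : (suppc c w'.val).card ≤ Fintype.card ι := by
            classical
            exact Finset.card_le_univ _
          have : g w' = 0 := by
            rcases N with _ | N
            · omega
            · exact ih N (Nat.lt_succ_self N) w' (by omega)
          rw [this, zero_mul]
        · exact absurd (Subtype.ext heq.symm) hne
    · intro hmem; exact absurd (Finset.mem_univ w) hmem


lemma chi_indep_restricted (c : ∀ i, Fin (q i)) (MP : Finset ι → Prop) :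
    LinearIndependent ℝ (fun w : PTt q c MP => (fun z : PTt q c MP => chi c w.val z.val)) := by
  rw [Fintype.linearIndependent_iff]
  intro g hg
  apply eval_zero_forward c MP g
  intro w'
  have := congrFun hg w'
  simpa [Finset.sum_apply] using this

lemma chi_indep (c : ∀ i, Fin (q i)) (MP : Finset ι → Prop) :
    LinearIndependent ℝ (fun w : PTt q c MP => chi c w.val) := by
  apply LinearIndependent.of_comp
    (LinearMap.funLeft ℝ ℝ (fun z : PTt q c MP => z.val))
  exact chi_indep_restricted c MP

/-- a function depending only on coordinates in `s` lies in the span of the `chi`'s with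
support inside `s` -/
lemma depOn_mem_span (c : ∀ i, Fin (q i)) (s : Finset ι) :
    ∀ f : (∀ i, Fin (q i)) → ℝ,
      (∀ x x' : ∀ i, Fin (q i), (∀ i ∈ s, x i = x' i) → f x = f x') →
      f ∈ Submodule.span ℝ ((fun w => chi c w) '' {w | suppc c w ⊆ s}) := by
  induction s using Finset.induction_on with
  | empty =>
    intro f hf
    have hfc : f = (f c) • chi c c := by
      funext z
      have h1 : chi c c z = 1 := by
        rw [chi_eq_one_iff]
        intro i hi
        exact absurd (mem_suppc.1 hi) (by simp)
      have h2 : f z = f c := hf z c (by simp)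
      simp [h1, h2]
    rw [hfc]
    refine Submodule.smul_mem _ _ (Submodule.subset_span ?_)
    refine ⟨c, ?_, rfl⟩
    simp only [Set.mem_setOf_eq]
    intro i hi
    exact absurd (mem_suppc.1 hi) (by simp)
  | @insert a s ha ih =>
    intro f hf
    set F : Fin (q a) → (∀ i, Fin (q i)) → ℝ :=
      fun t z => f (Function.update z a t) with hF
    have hFdep : ∀ t, ∀ x x' : ∀ i, Fin (q i), (∀ i ∈ s, x i = x' i) → F t x = F t x' := by
      intro t x x' hxx
      apply hf
      intro i hi
      rcases Finset.mem_insert.1 hi with rfl | his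
      · simp [Function.update_self]
      · have hia : i ≠ a := by rintro rfl; exact ha his
        rw [Function.update_of_ne hia, Function.update_of_ne hia]
        exact hxx i his
    have hfid : f = (F (c a)) + ∑ t : Fin (q a),
        (fun z => if z a = t then (F t z - F (c a) z) else 0) := by
      funext z
      have hsum : ∑ t : Fin (q a), (if z a = t then (F t z - F (c a) z) else 0)
          = F (z a) z - F (c a) z := by
        rw [Finset.sum_eq_single (z a)]
        · simp
        · intro t _ htne
          rw [if_neg (fun hc => htne hc.symm)]
        · intro hmem; exact absurd (Finset.mem_univ _) hmem
      have hz : F (z a) z = f z := by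
        simp only [hF]
        rw [Function.update_eq_self]
      simp only [Pi.add_apply, Finset.sum_apply]
      rw [hsum, hz]
      ring
    have hmulind : ∀ (t : Fin (q a)), t ≠ c a → ∀ (g : (∀ i, Fin (q i)) → ℝ),
        g ∈ Submodule.span ℝ ((fun w => chi c w) '' {w | suppc c w ⊆ s}) →
        (fun z => if z a = t then g z else 0) ∈
          Submodule.span ℝ ((fun w => chi c w) '' {w | suppc c w ⊆ insert a s}) := by
      intro t hta g hg
      induction hg using Submodule.span_induction with
      | mem x hx =>
        obtain ⟨w, hw, rfl⟩ := hx
        · have hwa : w a = c a := by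
            apply eq_center_of_not_mem_suppc
            intro hmem
            exact ha (hw hmem)
          have hsupp : suppc c (Function.update w a t) = insert a (suppc c w) := by
            ext i
            rcases eq_or_ne i a with rfl | hia
            · simp [mem_suppc, Function.update_self, hta]
            · simp [mem_suppc, Function.update_of_ne hia, hia]
          have hchi : (fun z => if z a = t then chi c w z else 0)
              = chi c (Function.update w a t) := by
            funext z
            unfold chi
            rw [hsupp, Finset.prod_insert (fun hmem => ha (hw hmem)), Function.update_self]
            have : ∀ i ∈ suppc c w,
                (if z i = Function.update w a t i then (1:ℝ) else 0)
                = (if z i = w i then (1:ℝ) else 0) := by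
              intro i hi
              have hia : i ≠ a := by rintro rfl; exact ha (hw hi)
              rw [Function.update_of_ne hia]
            rw [Finset.prod_congr rfl this]
            by_cases hza : z a = t
            · rw [if_pos hza, if_pos hza, one_mul]
            · rw [if_neg hza, if_neg hza, zero_mul]
          rw [hchi]
          apply Submodule.subset_span
          refine ⟨Function.update w a t, ?_, rfl⟩
          simp only [Set.mem_setOf_eq, hsupp]
          exact Finset.insert_subset_insert a hw
      | zero =>
        convert Submodule.zero_mem _ using 1
        funext z; simp
      | add x y _ _ hx hy =>
        convert Submodule.add_mem _ hx hy using 1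
        funext z; simp only [Pi.add_apply]
        split_ifs <;> simp
      | smul r x _ hx =>
        convert Submodule.smul_mem _ r hx using 1
        funext z; simp only [Pi.smul_apply, smul_eq_mul]
        split_ifs <;> simp
    rw [hfid]
    apply Submodule.add_mem
    · have := ih (F (c a)) (hFdep (c a))
      refine Submodule.span_mono ?_ this
      apply Set.image_mono
      intro w hw
      exact hw.trans (Finset.subset_insert a s)
    · apply Submodule.sum_mem
      intro t _
      by_cases hta : t = c a
      · subst hta
        convert Submodule.zero_mem _ using 1
        funext z
        simp
      · apply hmulind t hta
        apply Submodule.sub_mem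
        · exact ih (F t) (hFdep t)
        · exact ih (F (c a)) (hFdep (c a))


lemma suppc_self (c : ∀ i, Fin (q i)) : suppc c c = ∅ := by
  simp [suppc]

lemma chi_depOn (c w : ∀ i, Fin (q i)) :
    ∀ x x' : ∀ i, Fin (q i), (∀ i ∈ suppc c w, x i = x' i) → chi c w x = chi c w x' := by
  intro x x' hxx
  unfold chi
  apply Finset.prod_congr rfl
  intro i hi
  rw [hxx i hi]

/-- the generic hierarchical space equals the span of the chi family -/
lemma span_gen_eq (c : ∀ i, Fin (q i)) (MP : Finset ι → Prop)
    (hMP : ∀ s, MP s → ∀ t ⊆ s, MP t) :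
    Submodule.span ℝ {f : (∀ i, Fin (q i)) → ℝ | ∃ s, MP s ∧
        ∀ x x' : ∀ i, Fin (q i), (∀ i ∈ s, x i = x' i) → f x = f x'}
      = Submodule.span ℝ (Set.range (fun w : PTt q c MP => chi c w.val)) := by
  apply le_antisymm
  · rw [Submodule.span_le]
    rintro f ⟨s, hs, hdep⟩
    have hmem := depOn_mem_span c s f hdep
    have hsub : ((fun w => chi c w) '' {w | suppc c w ⊆ s})
        ⊆ Set.range (fun w : PTt q c MP => chi c w.val) := by
      rintro _ ⟨w, hw, rfl⟩
      exact ⟨⟨w, hMP s hs _ hw⟩, rfl⟩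
    exact Submodule.span_mono hsub hmem
  · rw [Submodule.span_le]
    rintro _ ⟨w, rfl⟩
    apply Submodule.subset_span
    exact ⟨suppc c w.val, w.2, chi_depOn c w.val⟩

lemma finrank_gen (c : ∀ i, Fin (q i)) (MP : Finset ι → Prop)
    (hMP : ∀ s, MP s → ∀ t ⊆ s, MP t) :
    Module.finrank ℝ (Submodule.span ℝ {f : (∀ i, Fin (q i)) → ℝ | ∃ s, MP s ∧
        ∀ x x' : ∀ i, Fin (q i), (∀ i ∈ s, x i = x' i) → f x = f x'})
      = Fintype.card (PTt q c MP) := by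
  rw [span_gen_eq c MP hMP]
  exact finrank_span_eq_card (chi_indep c MP)

lemma card_fiber (c : ∀ i, Fin (q i)) (s : Finset ι) :
    (Finset.univ.filter (fun w : ∀ i, Fin (q i) => suppc c w = s)).card
      = ∏ i ∈ s, (q i - 1) := by
  classical
  rw [← Fintype.card_subtype]
  have e : {w : ∀ i, Fin (q i) // suppc c w = s} ≃ (∀ i : s, {t : Fin (q i.val) // t ≠ c i.val}) :=
    { toFun := fun w i => ⟨w.val i.val, by
        have := w.2
        have hi : (i.val : ι) ∈ suppc c w.val := by rw [this]; exact i.2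
        exact mem_suppc.1 hi⟩
      invFun := fun v => ⟨fun i => if h : i ∈ s then (v ⟨i, h⟩).val else c i, by
        ext i
        rw [mem_suppc]
        by_cases h : i ∈ s
        · simp only [dif_pos h]
          exact ⟨fun _ => h, fun _ => (v ⟨i, h⟩).2⟩
        · simp only [dif_neg h]
          exact ⟨fun hc => absurd rfl hc, fun hc => absurd hc h⟩⟩
      left_inv := by
        intro w
        apply Subtype.ext
        funext i
        by_cases h : i ∈ s
        · simp [dif_pos h]
        · simp only [dif_neg h]
          have : i ∉ suppc c w.val := by rw [w.2]; exact h
          exact (eq_center_of_not_mem_suppc this).symm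
      right_inv := by
        intro v
        funext i
        apply Subtype.ext
        simp [dif_pos i.2] }
  rw [Fintype.card_congr e, Fintype.card_pi]
  rw [← Finset.prod_coe_sort s (fun i => q i - 1)]
  apply Finset.prod_congr rfl
  intro i _
  rw [Fintype.card_subtype_compl, Fintype.card_subtype_eq, Fintype.card_fin]

lemma card_PTt (c : ∀ i, Fin (q i)) (MP : Finset ι → Prop) :
    Fintype.card (PTt q c MP)
      = ∑ s ∈ Finset.univ.filter MP, ∏ i ∈ s, (q i - 1) := by
  classical
  have : Fintype.card (PTt q c MP)
      = (Finset.univ.filter (fun w : ∀ i, Fin (q i) => MP (suppc c w))).card := by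
    exact Fintype.card_subtype _
  rw [this]
  rw [Finset.card_eq_sum_card_fiberwise
    (f := fun w : ∀ i, Fin (q i) => suppc c w) (t := Finset.univ.filter MP)
    (by intro x hx; simp only [Finset.mem_coe, Finset.mem_filter, Finset.mem_univ, true_and] at hx ⊢; exact hx)]
  apply Finset.sum_congr rfl
  intro s hs
  have hMPs : MP s := (Finset.mem_filter.1 hs).2
  rw [Finset.filter_filter]
  have : (Finset.univ.filter fun w : ∀ i, Fin (q i) => MP (suppc c w) ∧ suppc c w = s)
      = Finset.univ.filter fun w : ∀ i, Fin (q i) => suppc c w = s := by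
    apply Finset.filter_congr
    intro w _
    constructor
    · exact fun h => h.2
    · exact fun h => ⟨by rw [h]; exact hMPs, h⟩
  rw [this, card_fiber]

lemma exists_interp (c : ∀ i, Fin (q i)) (MP : Finset ι → Prop)
    (hMP : ∀ s, MP s → ∀ t ⊆ s, MP t) (hM0 : MP ∅)
    (h : PTt q c MP → ℝ) :
    ∃ f : (∀ i, Fin (q i)) → ℝ,
      f ∈ Submodule.span ℝ {f : (∀ i, Fin (q i)) → ℝ | ∃ s, MP s ∧
        ∀ x x' : ∀ i, Fin (q i), (∀ i ∈ s, x i = x' i) → f x = f x'}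
      ∧ ∀ z : PTt q c MP, f z.val = h z := by
  classical
  have hne : Nonempty (PTt q c MP) := ⟨⟨c, by rw [suppc_self]; exact hM0⟩⟩
  have hspan : Submodule.span ℝ (Set.range
      (fun w : PTt q c MP => (fun z : PTt q c MP => chi c w.val z.val))) = ⊤ := by
    apply (chi_indep_restricted c MP).span_eq_top_of_card_eq_finrank
    rw [Module.finrank_fintype_fun_eq_card]
  have hmem : h ∈ Submodule.span ℝ (Set.range
      (fun w : PTt q c MP => (fun z : PTt q c MP => chi c w.val z.val))) := by
    rw [hspan]; trivial
  rw [mem_span_range_iff_exists_fun ℝ] at hmem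
  obtain ⟨g, hg⟩ := hmem
  refine ⟨∑ w : PTt q c MP, g w • chi c w.val, ?_, ?_⟩
  · rw [span_gen_eq c MP hMP]
    apply Submodule.sum_mem
    intro w _
    exact Submodule.smul_mem _ _ (Submodule.subset_span (Set.mem_range_self w))
  · intro z
    have := congrFun hg z
    simpa [Finset.sum_apply] using this

-- APPEND_HERE
end AuxTrop



section ProdBound

open Module Submodule

lemma finrank_span_mul {X : Type*} [Fintype X]
    (U V : Submodule ℝ (X → ℝ)) (W : Set (X → ℝ))
    (hW : ∀ h ∈ W, ∃ f ∈ U, ∃ g ∈ V, h = f * g) :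
    Module.finrank ℝ (Submodule.span ℝ W) ≤ Module.finrank ℝ U * Module.finrank ℝ V := by
  classical
  let bU := Module.finBasis ℝ U
  let bV := Module.finBasis ℝ V
  set P : (Fin (Module.finrank ℝ U) × Fin (Module.finrank ℝ V)) → (X → ℝ) :=
    fun p => ((bU p.1 : X → ℝ)) * ((bV p.2 : X → ℝ)) with hP
  have hWP : W ⊆ (Submodule.span ℝ (Set.range P) : Set (X → ℝ)) := by
    intro h hh
    obtain ⟨f, hf, g, hg, rfl⟩ := hW h hh
    have hf'' : f = ∑ s, (bU.repr ⟨f, hf⟩) s • (bU s : X → ℝ) := by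
      have := congrArg (Submodule.subtype U) (bU.sum_repr ⟨f, hf⟩).symm
      simp only [map_sum, map_smul, Submodule.subtype_apply] at this; exact this
    have hg'' : g = ∑ t, (bV.repr ⟨g, hg⟩) t • (bV t : X → ℝ) := by
      have := congrArg (Submodule.subtype V) (bV.sum_repr ⟨g, hg⟩).symm
      simp only [map_sum, map_smul, Submodule.subtype_apply] at this; exact this
    rw [hf'', hg'', Finset.sum_mul_sum]
    apply Submodule.sum_mem
    intro s _
    apply Submodule.sum_mem
    intro t _
    rw [smul_mul_smul_comm]
    exact Submodule.smul_mem _ _ (Submodule.subset_span ⟨(s, t), rfl⟩)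
  calc Module.finrank ℝ (Submodule.span ℝ W)
      ≤ Module.finrank ℝ (Submodule.span ℝ (Set.range P)) :=
        Submodule.finrank_mono (Submodule.span_le.2 hWP)
    _ ≤ Fintype.card (Fin (Module.finrank ℝ U) × Fin (Module.finrank ℝ V)) :=
        finrank_range_le_card P
    _ = Module.finrank ℝ U * Module.finrank ℝ V := by
        rw [Fintype.card_prod, Fintype.card_fin, Fintype.card_fin]

/-- upper bound for the rank of the tropical morphism matrix -/
lemma tropMat_rank_le {a bn : ℕ} {X Y : Type*} [Fintype X] [Fintype Y]
    (A : Matrix (Fin a) X ℝ) (B : Matrix (Fin bn) Y ℝ) (θ : Fin a × Fin bn → ℝ) :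
    (tropMat A B θ).rank ≤ A.rank * B.rank := by
  classical
  set D : Matrix Y X ℝ := fun y x => if y ∈ infSet A B θ x then ((infSet A B θ x).card : ℝ)⁻¹ else 0
    with hD
  set G : Matrix (Fin bn) X ℝ := B * D with hG
  have hGval : ∀ (p2 : Fin bn) (x : X),
      G p2 x = ((infSet A B θ x).card : ℝ)⁻¹ * ∑ y ∈ infSet A B θ x, B p2 y := by
    intro p2 x
    simp only [hG, Matrix.mul_apply]
    simp only [hD]
    rw [Finset.mul_sum]
    rw [← Finset.sum_filter_of_ne (p := fun y => y ∈ infSet A B θ x)]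
    · rw [Finset.filter_mem_eq_inter, Finset.univ_inter]
      apply Finset.sum_congr rfl
      intro y hy
      rw [if_pos hy]
      ring
    · intro y _ hne
      by_contra hnot
      rw [if_neg hnot, mul_zero] at hne
      exact hne rfl
  have hrows : ∀ p : Fin a × Fin bn, tropMat A B θ p = (A p.1) * (G p.2) := by
    intro p
    funext x
    simp only [tropMat, Pi.mul_apply, hGval]
  have h1 : (tropMat A B θ).rank
      = Module.finrank ℝ (Submodule.span ℝ (Set.range (tropMat A B θ))) :=
    Matrix.rank_eq_finrank_span_row _
  have h2 : Module.finrank ℝ (Submodule.span ℝ (Set.range (tropMat A B θ)))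
      ≤ Module.finrank ℝ (Submodule.span ℝ (Set.range A))
        * Module.finrank ℝ (Submodule.span ℝ (Set.range G)) := by
    apply finrank_span_mul
    rintro _ ⟨p, rfl⟩
    exact ⟨A p.1, Submodule.subset_span (Set.mem_range_self _),
      G p.2, Submodule.subset_span (Set.mem_range_self _), hrows p⟩
  have h3 : Module.finrank ℝ (Submodule.span ℝ (Set.range G)) ≤ B.rank := by
    rw [show Set.range G = Set.range G.row from rfl, ← Matrix.rank_eq_finrank_span_row]
    exact Matrix.rank_mul_le_left B D
  have h4 : Module.finrank ℝ (Submodule.span ℝ (Set.range A)) = A.rank :=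
    (Matrix.rank_eq_finrank_span_row A).symm
  rw [h1]
  calc Module.finrank ℝ (Submodule.span ℝ (Set.range (tropMat A B θ)))
      ≤ _ * _ := h2
    _ ≤ A.rank * B.rank := by
        rw [h4]
        exact Nat.mul_le_mul_left _ h3

end ProdBound


section DistFun

open Finset Submodule

/-- the (real-valued) Hamming-distance-to-center function lies in `Vk` -/
lemma dist_fun_mem_Vk (n : ℕ) (q : Fin n → ℕ) (k : ℕ) (hk1 : 1 ≤ k)
    (c' : ∀ i, Fin (q i)) :
    (fun x : ∀ i, Fin (q i) => (hammingDist x c' : ℝ)) ∈ Vk n q k := by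
  classical
  have hh : (fun x : ∀ i, Fin (q i) => (hammingDist x c' : ℝ))
      = ∑ i : Fin n, (fun x : ∀ i, Fin (q i) => if x i = c' i then (0:ℝ) else 1) := by
    funext x
    rw [Finset.sum_apply]
    unfold hammingDist
    rw [Finset.card_filter]
    push_cast
    apply Finset.sum_congr rfl
    intro i _
    by_cases h : x i = c' i
    · simp [h]
    · simp [h]
  rw [hh]
  apply Submodule.sum_mem
  intro i _
  apply Submodule.subset_span
  refine ⟨{i}, by simpa using hk1, ?_⟩
  intro x x' hxx
  dsimp only
  rw [hxx i (Finset.mem_singleton_self i)]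

lemma const_fun_mem_Vk (n : ℕ) (q : Fin n → ℕ) (k : ℕ) (C : ℝ) :
    (fun _ : ∀ i, Fin (q i) => C) ∈ Vk n q k := by
  apply Submodule.subset_span
  exact ⟨∅, by simp, fun x x' _ => rfl⟩

end DistFun

-- MAIN_LEMMAS_HERE

set_option maxHeartbeats 2000000 in
/-- general Kronecker product of hierarchical models.  Visible
`k`-interaction model, hidden hierarchical model with interactions `Λ'` (so
`rank B = 1 + ∑_{λ'∈Λ'∖{∅}} ∏_{j∈λ'}(|Y_j|−1)`): if `X` contains `rank B` pairwise
disjoint radius-`k` Hamming balls, then `max_θ rank 𝒜_θ = rank A · rank B`. -/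
theorem tropical_general_kronecker
    (n : ℕ) (q : Fin n → ℕ) (hq : ∀ i, 2 ≤ q i)
    (k : ℕ) (hk1 : 1 ≤ k) (hkn : k ≤ n)
    (a : ℕ) (A : Matrix (Fin a) (∀ i, Fin (q i)) ℝ)
    (hA : Submodule.span ℝ (Set.range A) = Vk n q k)
    (m : ℕ) (r : Fin m → ℕ) (hr : ∀ j, 2 ≤ r j)
    (Λ' : Finset (Finset (Fin m))) (hempty : ∅ ∈ Λ')
    (hΛ' : ∀ s ∈ Λ', ∀ t ⊆ s, t ∈ Λ')
    (bn : ℕ) (B : Matrix (Fin bn) (∀ j, Fin (r j)) ℝ)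
    (hB : Submodule.span ℝ (Set.range B) = VLam m r Λ')
    (c : Fin B.rank → ∀ i, Fin (q i))
    (hdisj : ∀ j j', j ≠ j' →
      ∀ x, ¬(hammingDist x (c j) ≤ k ∧ hammingDist x (c j') ≤ k)) :
    B.rank = 1 + ∑ s ∈ Λ'.erase ∅, ∏ j ∈ s, (r j - 1) ∧
    IsGreatest {s : ℕ | ∃ θ : Fin a × Fin bn → ℝ, s = (tropMat A B θ).rank}
      (A.rank * B.rank) := by
  classical
  set c0 : ∀ j, Fin (r j) := fun j => ⟨0, by have := hr j; omega⟩ with hc0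
  set MPY : Finset (Fin m) → Prop := fun s => s ∈ Λ' with hMPY
  have hMPYc : ∀ s, MPY s → ∀ t ⊆ s, MPY t := fun s hs t ht => hΛ' s hs t ht
  have hBrank : B.rank = Fintype.card (PTt r c0 MPY) := by
    rw [Matrix.rank_eq_finrank_span_row, Matrix.row_def, hB]
    exact finrank_gen c0 MPY hMPYc
  have hcardY : Fintype.card (PTt r c0 MPY) = ∑ s ∈ Λ', ∏ j ∈ s, (r j - 1) := by
    rw [card_PTt c0 MPY]
    congr 1
    ext s
    simp [hMPY]
  have part1 : B.rank = 1 + ∑ s ∈ Λ'.erase ∅, ∏ j ∈ s, (r j - 1) := by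
    rw [hBrank, hcardY, ← Finset.add_sum_erase Λ' _ hempty]
    simp
  refine ⟨part1, ?_, ?_⟩
  swap
  · -- upper bound
    rintro s ⟨θ', rfl⟩
    exact tropMat_rank_le A B θ'
  -- existence of a maximizing θ
  have eI : Fin B.rank ≃ PTt r c0 MPY := Fintype.equivOfCardEq (by rw [Fintype.card_fin, hBrank])
  set cc : PTt r c0 MPY → (∀ i, Fin (q i)) := fun w => c (eI.symm w) with hcc
  have hdisj' : ∀ w w' : PTt r c0 MPY, w ≠ w' → ∀ x, hammingDist x (cc w) ≤ k →
      ¬ (hammingDist x (cc w') ≤ k) := by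
    intro w w' hne x h1 h2
    exact hdisj (eI.symm w) (eI.symm w') (fun hceq => hne (eI.symm.injective hceq)) x ⟨h1, h2⟩
  set SU : Finset (Fin m) := Finset.univ.filter (fun l => ({l} : Finset (Fin m)) ∈ Λ') with hSU
  have hsubSU : ∀ s ∈ Λ', s ⊆ SU := by
    intro s hs l hl
    simp only [hSU, Finset.mem_filter, Finset.mem_univ, true_and]
    exact hΛ' s hs {l} (Finset.singleton_subset_iff.2 hl)
  set Cls : PTt r c0 MPY → Finset (∀ j, Fin (r j)) := fun w =>
    Finset.univ.filter (fun y => ∀ l ∈ SU, y l = w.val l) with hCls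
  have hmemCls : ∀ w : PTt r c0 MPY, w.val ∈ Cls w := by
    intro w
    simp [hCls]
  set Rc := Fintype.card (PTt r c0 MPY) with hRc
  clear_value Rc
  set δ : ℝ := 1 / (2 * ((n:ℝ) + 1) * ((Rc:ℝ) + 1) + 1) with hδ
  have hRpos : 0 < (Rc:ℝ) + 1 := by positivity
  have hδpos : 0 < δ := by
    rw [hδ]; positivity
  have hδle1 : δ ≤ 1 := by
    rw [hδ]
    rw [div_le_one (show (0:ℝ) < 2 * ((n:ℝ) + 1) * ((Rc:ℝ) + 1) + 1 by positivity)]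
    nlinarith [(Nat.cast_nonneg n : (0:ℝ) ≤ (n:ℝ)), (Nat.cast_nonneg Rc : (0:ℝ) ≤ (Rc:ℝ))]
  have hδkey : ((n:ℝ) + 1) * (Rc:ℝ) * δ < 1/2 := by
    have hD : (0:ℝ) < 2 * ((n:ℝ) + 1) * ((Rc:ℝ) + 1) + 1 := by positivity
    rw [hδ, mul_one_div, div_lt_div_iff₀ hD (by norm_num : (0:ℝ) < 2)]
    nlinarith [(Nat.cast_nonneg n : (0:ℝ) ≤ (n:ℝ)), (Nat.cast_nonneg Rc : (0:ℝ) ≤ (Rc:ℝ))]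
  clear_value δ
  set ε : PTt r c0 MPY → ℝ := fun w => δ ^ (m + 1 - (suppc c0 w.val).card) with hε
  have hεpos : ∀ w, 0 < ε w := fun w => pow_pos hδpos _
  have hεmono : ∀ w w' : PTt r c0 MPY,
      (suppc c0 w.val).card < (suppc c0 w'.val).card → ε w ≤ δ * ε w' := by
    intro w w' hlt
    have hcard : (suppc c0 w'.val).card ≤ m := by
      have := Finset.card_le_univ (suppc c0 w'.val)
      simpa using this
    have he : m + 1 - (suppc c0 w.val).card ≥ (m + 1 - (suppc c0 w'.val).card) + 1 := by omega
    calc ε w = δ ^ (m + 1 - (suppc c0 w.val).card) := rfl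
      _ ≤ δ ^ ((m + 1 - (suppc c0 w'.val).card) + 1) := by
          apply pow_le_pow_of_le_one hδpos.le hδle1 he
      _ = δ * ε w' := by rw [pow_succ]; ring
  clear_value ε
  set u : PTt r c0 MPY → (∀ i, Fin (q i)) → ℝ :=
    fun w x => (k:ℝ) + 1/2 - (hammingDist x (cc w) : ℝ) with hu
  have hdn : ∀ (x y : ∀ i, Fin (q i)), (hammingDist x y : ℝ) ≤ (n:ℝ) := by
    intro x y
    have := hammingDist_le_card_fintype (x := x) (y := y)
    exact_mod_cast le_trans (Nat.cast_le.2 this) (by simp)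
  have hu_up : ∀ w x, u w x ≤ (n:ℝ) + 1 := by
    intro w x
    have hk : (k:ℝ) ≤ (n:ℝ) := Nat.cast_le.2 hkn
    have : (0:ℝ) ≤ (hammingDist x (cc w) : ℝ) := Nat.cast_nonneg _
    rw [hu]; dsimp only; linarith
  have hu_low : ∀ w x, -((n:ℝ) + 1) ≤ u w x := by
    intro w x
    have := hdn x (cc w)
    have hk0 : (0:ℝ) ≤ (k:ℝ) := Nat.cast_nonneg _
    rw [hu]; dsimp only; linarith
  have hu_own : ∀ w x, hammingDist x (cc w) ≤ k → 1/2 ≤ u w x := by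
    intro w x hx
    have : (hammingDist x (cc w) : ℝ) ≤ (k:ℝ) := Nat.cast_le.2 hx
    rw [hu]; dsimp only; linarith
  have hu_far : ∀ w x, ¬ (hammingDist x (cc w) ≤ k) → u w x ≤ -(1/2) := by
    intro w x hx
    have : (k:ℝ) + 1 ≤ (hammingDist x (cc w) : ℝ) := by
      have : k + 1 ≤ hammingDist x (cc w) := by omega
      exact_mod_cast this
    rw [hu]; dsimp only; linarith
  clear_value u
  set F : (∀ i, Fin (q i)) → (∀ j, Fin (r j)) → ℝ :=
    fun x y => ∑ w : PTt r c0 MPY, ε w * u w x * chi c0 w.val y with hF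
  -- realizability of F
  have hfw : ∀ w : PTt r c0 MPY, (fun x => ε w * u w x) ∈ Submodule.span ℝ (Set.range A) := by
    intro w
    rw [hA]
    have h1 : (fun x : ∀ i, Fin (q i) => ε w * u w x)
        = ε w • ((fun _ : ∀ i, Fin (q i) => (k:ℝ) + 1/2)
            - (fun x : ∀ i, Fin (q i) => (hammingDist x (cc w) : ℝ))) := by
      funext x
      simp [hu]
    rw [h1]
    exact Submodule.smul_mem _ _ (Submodule.sub_mem _ (const_fun_mem_Vk n q k _)
      (dist_fun_mem_Vk n q k hk1 (cc w)))
  have hgw : ∀ w : PTt r c0 MPY, chi c0 w.val ∈ Submodule.span ℝ (Set.range B) := by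
    intro w
    rw [hB]
    exact Submodule.subset_span ⟨suppc c0 w.val, w.2, chi_depOn c0 w.val⟩
  choose α hα using fun w : PTt r c0 MPY => (Submodule.mem_span_range_iff_exists_fun ℝ).1 (hfw w)
  choose β hβ using fun w : PTt r c0 MPY => (Submodule.mem_span_range_iff_exists_fun ℝ).1 (hgw w)
  set θ : Fin a × Fin bn → ℝ := fun s => ∑ w : PTt r c0 MPY, α w s.1 * β w s.2 with hθ
  have hkey : ∀ x y, ∑ s : Fin a × Fin bn, θ s * (A s.1 x * B s.2 y) = F x y := by
    intro x y
    rw [Fintype.sum_prod_type]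
    have step1 : ∀ p : Fin a, ∑ q' : Fin bn, θ (p, q') * (A p x * B q' y)
        = ∑ w : PTt r c0 MPY, ∑ q' : Fin bn, (α w p * A p x) * (β w q' * B q' y) := by
      intro p
      rw [Finset.sum_comm]
      apply Finset.sum_congr rfl
      intro q' _
      rw [hθ]
      dsimp only
      rw [Finset.sum_mul]
      apply Finset.sum_congr rfl
      intro w _
      ring
    rw [Finset.sum_congr rfl (fun p _ => step1 p), Finset.sum_comm]
    apply Finset.sum_congr rfl
    intro w _
    have hαx : ∑ p : Fin a, α w p * A p x = ε w * u w x := by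
      have := congrFun (hα w) x
      simpa [Finset.sum_apply] using this
    have hβy : ∑ q' : Fin bn, β w q' * B q' y = chi c0 w.val y := by
      have := congrFun (hβ w) y
      simpa [Finset.sum_apply] using this
    calc ∑ p : Fin a, ∑ q' : Fin bn, (α w p * A p x) * (β w q' * B q' y)
        = (∑ p : Fin a, α w p * A p x) * (∑ q' : Fin bn, β w q' * B q' y) := by
          rw [Finset.sum_mul_sum]
      _ = ε w * u w x * chi c0 w.val y := by rw [hαx, hβy]

  have hchiagree : ∀ (w i : PTt r c0 MPY) (y : ∀ j, Fin (r j)),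
      (∀ l ∈ SU, y l = i.val l) → chi c0 w.val y = chi c0 w.val i.val := by
    intro w i y hy
    apply chi_depOn
    intro l hl
    exact hy l ((hsubSU _ w.2) hl)
  have hFle : ∀ (i : PTt r c0 MPY) (x), hammingDist x (cc i) ≤ k →
      (∀ y, F x y ≤ F x i.val) ∧ (∀ y, y ∉ Cls i → F x y < F x i.val) := by
    intro i x hx
    have hune : ∀ w : PTt r c0 MPY, w ≠ i → u w x ≤ -(1/2) := by
      intro w hw
      exact hu_far w x (hdisj' i w (fun h => hw h.symm) x hx)
    have hdiff : ∀ y, F x i.val - F x y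
        = ∑ w : PTt r c0 MPY, ε w * u w x * (chi c0 w.val i.val - chi c0 w.val y) := by
      intro y
      rw [hF]
      dsimp only
      rw [← Finset.sum_sub_distrib]
      apply Finset.sum_congr rfl
      intro w _
      ring
    have hmain : ∀ y, (0 ≤ F x i.val - F x y) ∧ ((y ∉ Cls i) → 0 < F x i.val - F x y) := by
      intro y
      by_cases hy1 : ∀ l ∈ suppc c0 i.val, y l = i.val l
      · -- case 1 : y agrees with i on the support of i
        have hterm : ∀ w : PTt r c0 MPY,
            0 ≤ ε w * u w x * (chi c0 w.val i.val - chi c0 w.val y) := by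
          intro w
          rcases chi_cases c0 w.val i.val with h0 | h1
          · rcases chi_cases c0 w.val y with hy0 | hy1'
            · rw [h0, hy0]; simp
            · have hwne : w ≠ i := by
                intro he
                rw [he, chi_self] at h0
                norm_num at h0
              have hu' := hune w hwne
              have hε' := hεpos w
              rw [h0, hy1']
              have h3 : 0 ≤ -(u w x) := by linarith
              have h4 : 0 ≤ ε w * -(u w x) := mul_nonneg hε'.le h3
              have h5 : ε w * u w x * (0 - 1) = ε w * -(u w x) := by ring
              linarith
          · have h2 : chi c0 w.val y = 1 := by
              rw [chi_eq_one_iff] at h1 ⊢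
              intro l hl
              have hwl : i.val l = w.val l := h1 l hl
              have hli : l ∈ suppc c0 i.val := by
                rw [mem_suppc] at hl ⊢
                rw [hwl]; exact hl
              rw [hy1 l hli, hwl]
            rw [h1, h2]; simp
        constructor
        · rw [hdiff y]
          exact Finset.sum_nonneg (fun w _ => hterm w)
        · intro hyc
          rw [hdiff y]
          have hex : ∃ l ∈ SU, y l ≠ i.val l := by
            by_contra hno
            push_neg at hno
            apply hyc
            rw [hCls]
            simp only [Finset.mem_filter, Finset.mem_univ, true_and]
            exact hno
          obtain ⟨l, hlSU, hyl⟩ := hex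
          have hlni : l ∉ suppc c0 i.val := fun hmem => hyl (hy1 l hmem)
          have hil : i.val l = c0 l := eq_center_of_not_mem_suppc hlni
          have hylc : y l ≠ c0 l := fun h => hyl (h.trans hil.symm)
          set wst : ∀ j, Fin (r j) := Function.update c0 l (y l) with hwst
          have hsuppw : suppc c0 wst = {l} := by
            ext j
            rw [mem_suppc, Finset.mem_singleton]
            rcases eq_or_ne j l with rfl | hj
            · simp [hwst, Function.update_self, hylc]
            · simp [hwst, Function.update_of_ne hj, hj]
          have hlΛ : ({l} : Finset (Fin m)) ∈ Λ' := by
            simp only [hSU, Finset.mem_filter, Finset.mem_univ, true_and] at hlSU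
            exact hlSU
          have hwstP : MPY (suppc c0 wst) := by
            rw [hsuppw]
            exact hlΛ
          set W : PTt r c0 MPY := (⟨wst, hwstP⟩ : PTt r c0 MPY) with hW
          apply Finset.sum_pos' (fun w _ => hterm w)
          refine ⟨W, Finset.mem_univ W, ?_⟩
          have hWval : W.val = wst := rfl
          have hchiWy : chi c0 wst y = 1 := by
            rw [chi_eq_one_iff, hsuppw]
            intro j hj
            rw [Finset.mem_singleton] at hj
            subst hj
            simp [hwst]
          have hchiWi : chi c0 wst i.val = 0 := by
            rcases chi_cases c0 wst i.val with h | h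
            · exact h
            · exfalso
              rw [chi_eq_one_iff, hsuppw] at h
              have h' := h l (Finset.mem_singleton_self l)
              rw [hil] at h'
              apply hylc
              rw [h']
              simp [hwst]
          have hWne : W ≠ i := by
            intro he
            have hveq : wst = i.val := congrArg Subtype.val he
            have := congrFun hveq l
            rw [hil] at this
            apply hylc
            rw [← this]
            simp [hwst]
          have hu' := hune W hWne
          have hε' := hεpos W
          rw [hWval, hchiWy, hchiWi]
          have h3 : 0 < -(u W x) := by linarith
          have h4 : 0 < ε W * -(u W x) := mul_pos hε' h3
          have h5 : ε W * u W x * (0 - 1) = ε W * -(u W x) := by ring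
          linarith
      · -- case 2 : y disagrees with i on the support of i
        push_neg at hy1
        obtain ⟨l, hl, hyl⟩ := hy1
        have hchiIy : chi c0 i.val y = 0 := by
          rcases chi_cases c0 i.val y with h | h
          · exact h
          · exfalso
            rw [chi_eq_one_iff] at h
            exact hyl (h l hl)
        have hδεn : 0 < δ * ε i * ((n:ℝ)+1) := by
          have := hεpos i
          have : (0:ℝ) < (n:ℝ) + 1 := by positivity
          positivity
        have hterm2 : ∀ w : PTt r c0 MPY, w ≠ i →
            -(δ * ε i * ((n:ℝ)+1)) ≤ ε w * u w x * (chi c0 w.val i.val - chi c0 w.val y) := by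
          intro w hwne
          have hu' := hune w hwne
          have hεw := hεpos w
          have hεi := hεpos i
          have hchiy0 := chi_nonneg c0 w.val y
          have hchiy1 := chi_le_one c0 w.val y
          rcases chi_cases c0 w.val i.val with h0 | h1
          · rw [h0]
            have h3 : 0 ≤ ε w * -(u w x) * chi c0 w.val y :=
              mul_nonneg (mul_nonneg hεw.le (by linarith)) hchiy0
            have h4 : ε w * u w x * (0 - chi c0 w.val y) = ε w * -(u w x) * chi c0 w.val y := by
              ring
            linarith
          · have hcard : (suppc c0 w.val).card < (suppc c0 i.val).card := by
              rcases chi_triangle h1 with hlt | heq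
              · exact hlt
              · exact absurd (Subtype.ext heq) hwne
            have hεle := hεmono w i hcard
            have hulow := hu_low w x
            rw [h1]
            have d1 : 0 ≤ 1 - chi c0 w.val y := by linarith
            have d2 : 1 - chi c0 w.val y ≤ 1 := by linarith
            have d3 : ε w * (-((n:ℝ)+1)) * (1 - chi c0 w.val y)
                ≤ ε w * u w x * (1 - chi c0 w.val y) :=
              mul_le_mul_of_nonneg_right (mul_le_mul_of_nonneg_left hulow hεw.le) d1
            have hεneg : ε w * (-((n:ℝ)+1)) ≤ 0 := by nlinarith
            have d4 : ε w * (-((n:ℝ)+1)) * 1 ≤ ε w * (-((n:ℝ)+1)) * (1 - chi c0 w.val y) :=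
              mul_le_mul_of_nonpos_left d2 hεneg
            have d5 : (δ * ε i) * (-((n:ℝ)+1)) ≤ ε w * (-((n:ℝ)+1)) := by nlinarith
            have d6 : (δ * ε i) * (-((n:ℝ)+1)) = -(δ * ε i * ((n:ℝ)+1)) := by ring
            nlinarith
        have hsplit := Finset.add_sum_erase Finset.univ
          (fun w => ε w * u w x * (chi c0 w.val i.val - chi c0 w.val y)) (Finset.mem_univ i)
        have hTi : ε i * (1/2) ≤ ε i * u i x * (chi c0 i.val i.val - chi c0 i.val y) := by
          rw [chi_self, hchiIy]
          have h1 := hu_own i x hx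
          have h2 := hεpos i
          nlinarith
        have hrest : -(((Rc:ℝ)) * (δ * ε i * ((n:ℝ)+1)))
            ≤ ∑ w ∈ Finset.univ.erase i,
              ε w * u w x * (chi c0 w.val i.val - chi c0 w.val y) := by
          have hbound := Finset.sum_le_sum (s := Finset.univ.erase i)
            (f := fun _ : PTt r c0 MPY => -(δ * ε i * ((n:ℝ)+1)))
            (g := fun w => ε w * u w x * (chi c0 w.val i.val - chi c0 w.val y))
            (fun w hw => hterm2 w (Finset.ne_of_mem_erase hw))
          rw [Finset.sum_const, nsmul_eq_mul] at hbound
          have hcard : ((Finset.univ.erase i).card : ℝ) ≤ (Rc:ℝ) := by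
            have h1 : (Finset.univ.erase i).card ≤ Rc := by
              rw [hRc, ← Finset.card_univ]
              exact Finset.card_erase_le
            exact_mod_cast h1
          nlinarith
        have hpos : 0 < F x i.val - F x y := by
          rw [hdiff y, ← hsplit]
          have hk2 := hδkey
          have hεi := hεpos i
          have hcast : ((n:ℝ)+1) * (Rc:ℝ) * δ * ε i < (1/2) * ε i := by
            have := mul_lt_mul_of_pos_right hk2 hεi
            linarith
          have hre : (Rc:ℝ) * (δ * ε i * ((n:ℝ)+1)) = ((n:ℝ)+1) * (Rc:ℝ) * δ * ε i := by ring
          linarith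
        exact ⟨le_of_lt hpos, fun _ => hpos⟩
    constructor
    · intro y
      have := (hmain y).1
      linarith
    · intro y hy
      have := (hmain y).2 hy
      linarith
  have hFeq : ∀ (i : PTt r c0 MPY) (x) (y), y ∈ Cls i → F x y = F x i.val := by
    intro i x y hy
    rw [hCls] at hy
    simp only [Finset.mem_filter, Finset.mem_univ, true_and] at hy
    rw [hF]
    dsimp only
    apply Finset.sum_congr rfl
    intro w _
    rw [hchiagree w i y hy]
  have hinf : ∀ (i : PTt r c0 MPY) (x), hammingDist x (cc i) ≤ k →
      infSet A B θ x = Cls i := by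
    intro i x hx
    obtain ⟨hle, hlt⟩ := hFle i x hx
    ext y
    simp only [infSet, Finset.mem_filter, Finset.mem_univ, true_and]
    constructor
    · intro hy
      by_contra hyc
      have h1 := hy i.val
      rw [hkey, hkey] at h1
      exact absurd h1 (not_le.2 (hlt y hyc))
    · intro hy y'
      rw [hkey, hkey]
      calc F x y' ≤ F x i.val := hle y'
        _ = F x y := (hFeq i x y hy).symm

  -- column values of the tropical matrix on the balls
  have hval : ∀ g ∈ VLam m r Λ', ∀ (i : PTt r c0 MPY), ∀ y ∈ Cls i, g y = g i.val := by
    intro g hg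
    induction hg using Submodule.span_induction with
    | mem f hf =>
      obtain ⟨s, hs, hdep⟩ := hf
      intro i y hy
      rw [hCls] at hy
      simp only [Finset.mem_filter, Finset.mem_univ, true_and] at hy
      exact hdep y i.val (fun l hl => hy l (hsubSU s hs hl))
    | zero => intro i y _; rfl
    | add f g _ _ hf' hg' =>
      intro i y hy
      simp only [Pi.add_apply, hf' i y hy, hg' i y hy]
    | smul t f _ hf' =>
      intro i y hy
      simp only [Pi.smul_apply, hf' i y hy]
  have hcol : ∀ (i : PTt r c0 MPY) (x), hammingDist x (cc i) ≤ k →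
      ∀ p : Fin a × Fin bn, tropMat A B θ p x = A p.1 x * B p.2 i.val := by
    intro i x hx p
    have hBc : ∀ y ∈ Cls i, B p.2 y = B p.2 i.val :=
      hval (B p.2) (hB ▸ Submodule.subset_span (Set.mem_range_self p.2)) i
    have hcls_pos : (0:ℝ) < ((Cls i).card : ℝ) := by
      have h1 : 0 < (Cls i).card := Finset.card_pos.2 ⟨i.val, hmemCls i⟩
      exact_mod_cast h1
    show A p.1 x * (((infSet A B θ x).card : ℝ)⁻¹ * ∑ y ∈ infSet A B θ x, B p.2 y) = _
    rw [hinf i x hx, Finset.sum_congr rfl hBc, Finset.sum_const, nsmul_eq_mul,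
      inv_mul_cancel_left₀ (ne_of_gt hcls_pos)]
  refine ⟨θ, ?_⟩
  have hupper := tropMat_rank_le A B θ
  set T := (i : PTt r c0 MPY) × {x : ∀ i', Fin (q i') // hammingDist x (cc i) ≤ k} with hT
  set S : Matrix (∀ i', Fin (q i')) T ℝ := fun x t => if x = t.2.val then 1 else 0 with hS
  set N : Matrix (Fin a × Fin bn) T ℝ := tropMat A B θ * S with hN
  have hNval : ∀ (p : Fin a × Fin bn) (t : T), N p t = A p.1 t.2.val * B p.2 t.1.val := by
    intro p t
    rw [hN, Matrix.mul_apply]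
    rw [Finset.sum_eq_single t.2.val]
    · rw [hS]
      dsimp only
      rw [if_pos rfl, mul_one]
      exact hcol t.1 t.2.val t.2.2 p
    · intro x _ hne
      rw [hS]
      dsimp only
      rw [if_neg hne, mul_zero]
    · intro h
      exact absurd (Finset.mem_univ _) h
  have hMbinj : ∀ z : PTt r c0 MPY → ℝ,
      (∀ qq : Fin bn, ∑ i : PTt r c0 MPY, B qq i.val * z i = 0) → z = 0 := by
    intro z hz
    have hfunc : ∀ g ∈ Submodule.span ℝ (Set.range B),
        ∑ i : PTt r c0 MPY, z i * g i.val = 0 := by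
      intro g hg
      induction hg using Submodule.span_induction with
      | mem f hf =>
        obtain ⟨qq, rfl⟩ := hf
        rw [← hz qq]
        apply Finset.sum_congr rfl
        intro i _
        ring
      | zero => simp
      | add f g _ _ hf' hg' =>
        have hsplit2 : ∑ i : PTt r c0 MPY, z i * (f + g) i.val
            = (∑ i : PTt r c0 MPY, z i * f i.val) + ∑ i : PTt r c0 MPY, z i * g i.val := by
          rw [← Finset.sum_add_distrib]
          apply Finset.sum_congr rfl
          intro i _
          simp only [Pi.add_apply]
          ring
        rw [hsplit2, hf', hg', add_zero]
      | smul t f _ hf' =>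
        have hsplit2 : ∑ i : PTt r c0 MPY, z i * (t • f) i.val
            = t * ∑ i : PTt r c0 MPY, z i * f i.val := by
          rw [Finset.mul_sum]
          apply Finset.sum_congr rfl
          intro i _
          simp only [Pi.smul_apply, smul_eq_mul]
          ring
        rw [hsplit2, hf', mul_zero]
    have hz2 : ∀ w' : PTt r c0 MPY, ∑ w : PTt r c0 MPY, z w * chi c0 w'.val w.val = 0 :=
      fun w' => hfunc (chi c0 w'.val) (hgw w')
    funext w
    exact eval_zero_backward c0 MPY z hz2 w
  set Mb : Matrix (Fin bn) (PTt r c0 MPY) ℝ := Matrix.of (fun qq (i : PTt r c0 MPY) => B qq i.val)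
    with hMb
  have hker : LinearMap.ker Mb.mulVecLin = ⊥ := by
    rw [LinearMap.ker_eq_bot']
    intro z hz
    apply hMbinj z
    intro qq
    have h1 := congrFun hz qq
    simpa [Matrix.mulVecLin_apply, Matrix.mulVec, dotProduct, hMb] using h1
  obtain ⟨ψ, hψ⟩ := LinearMap.exists_leftInverse_of_injective Mb.mulVecLin hker
  have hφe : ∀ i : PTt r c0 MPY,
      Mb.mulVecLin (fun i' => if i = i' then (1:ℝ) else 0) = fun qq => B qq i.val := by
    intro i
    funext qq
    simp only [Matrix.mulVecLin_apply, Matrix.mulVec, dotProduct, hMb, Matrix.of_apply]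
    rw [Finset.sum_eq_single i]
    · rw [if_pos rfl, mul_one]
    · intro i' _ hne
      rw [if_neg (fun h => hne h.symm), mul_zero]
    · intro h
      exact absurd (Finset.mem_univ _) h
  have hψφ : ∀ zz : PTt r c0 MPY → ℝ, ψ (Mb.mulVecLin zz) = zz := by
    intro zz
    have := congrFun (congrArg DFunLike.coe hψ) zz
    simpa using this
  have hspanN : Submodule.span ℝ (Set.range N) = ⊤ := by
    rw [eq_top_iff]
    intro v _
    rw [pi_eq_sum_univ v]
    apply Submodule.sum_mem
    intro t0 _
    apply Submodule.smul_mem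
    obtain ⟨i0, x0, hx0⟩ := t0
    set d : Fin bn → ℝ := fun qq => ψ (fun q2 => if qq = q2 then (1:ℝ) else 0) i0 with hd0
    have hdual : ∀ i : PTt r c0 MPY,
        ∑ qq : Fin bn, d qq * B qq i.val = if i = i0 then (1:ℝ) else 0 := by
      intro i
      have h2 : ψ (fun qq => B qq i.val) = (fun i' => if i = i' then (1:ℝ) else 0) := by
        rw [← hφe i]
        exact hψφ _
      have h3 : (fun qq : Fin bn => B qq i.val)
          = ∑ qq : Fin bn, B qq i.val • (fun q2 : Fin bn => if qq = q2 then (1:ℝ) else 0) :=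
        pi_eq_sum_univ _
      have h4 : ψ (fun qq : Fin bn => B qq i.val) i0 = ∑ qq : Fin bn, d qq * B qq i.val := by
        rw [h3, map_sum]
        rw [Finset.sum_apply]
        apply Finset.sum_congr rfl
        intro qq _
        rw [map_smul]
        simp only [Pi.smul_apply, smul_eq_mul, hd0]
        ring
      rw [← h4, h2]
    obtain ⟨f, hfVk, hfval⟩ := exists_interp (q := q) (cc i0)
      (fun s : Finset (Fin n) => s.card ≤ k)
      (fun s hs t ht => le_trans (Finset.card_le_card ht) hs) (by simp)
      (fun z => if z.val = x0 then (1:ℝ) else 0)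
    have hfA : f ∈ Submodule.span ℝ (Set.range A) := by rw [hA]; exact hfVk
    obtain ⟨αf, hαf⟩ := (Submodule.mem_span_range_iff_exists_fun ℝ).1 hfA
    have hcomb : (fun t : T => if (⟨i0, ⟨x0, hx0⟩⟩ : T) = t then (1:ℝ) else 0)
        = ∑ p : Fin a × Fin bn, (αf p.1 * d p.2) • N p := by
      funext t
      obtain ⟨i, x, hx⟩ := t
      rw [Finset.sum_apply]
      have hterm : ∀ p : Fin a × Fin bn, ((αf p.1 * d p.2) • N p) (⟨i, ⟨x, hx⟩⟩ : T)
          = (αf p.1 * A p.1 x) * (d p.2 * B p.2 i.val) := by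
        intro p
        rw [Pi.smul_apply, hNval, smul_eq_mul]
        ring
      rw [Finset.sum_congr rfl (fun p _ => hterm p), Fintype.sum_prod_type]
      dsimp only
      rw [← Finset.sum_mul_sum]
      have hfx : ∑ p1 : Fin a, αf p1 * A p1 x = f x := by
        have h5 := congrFun hαf x
        simpa [Finset.sum_apply] using h5
      rw [hfx, hdual i]
      by_cases hii : i = i0
      · subst hii
        rw [if_pos rfl, mul_one, hfval ⟨x, hx⟩]
        by_cases hxe : x = x0
        · subst hxe
          rw [if_pos rfl, if_pos rfl]
        · rw [if_neg hxe, if_neg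
            (fun hc => hxe ((congrArg (fun t : T => t.2.val) hc).symm))]
      · rw [if_neg hii, mul_zero,
          if_neg (fun hc => hii ((congrArg (fun t : T => t.1) hc).symm))]
    rw [hcomb]
    apply Submodule.sum_mem
    intro p _
    exact Submodule.smul_mem _ _ (Submodule.subset_span (Set.mem_range_self p))
  have hNrank : N.rank = Fintype.card T := by
    rw [Matrix.rank_eq_finrank_span_row, Matrix.row_def, hspanN, finrank_top,
      Module.finrank_fintype_fun_eq_card]
  have hball : ∀ i : PTt r c0 MPY,
      Fintype.card {x : ∀ i', Fin (q i') // hammingDist x (cc i) ≤ k} = A.rank := by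
    intro i
    have e2 : {x : ∀ i', Fin (q i') // hammingDist x (cc i) ≤ k}
        ≃ PTt q (cc i) (fun s : Finset (Fin n) => s.card ≤ k) :=
      Equiv.subtypeEquivRight (fun x => Iff.rfl)
    rw [Fintype.card_congr e2, Matrix.rank_eq_finrank_span_row, Matrix.row_def, hA]
    exact (finrank_gen (cc i) (fun s : Finset (Fin n) => s.card ≤ k)
      (fun s hs t ht => le_trans (Finset.card_le_card ht) hs)).symm
  have hcardT : Fintype.card T = Rc * A.rank := by
    have hsig : Fintype.card T = ∑ i : PTt r c0 MPY,
        Fintype.card {x : ∀ i', Fin (q i') // hammingDist x (cc i) ≤ k} :=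
      Fintype.card_sigma
    rw [hsig, Finset.sum_congr rfl (fun i _ => hball i),
      Finset.sum_const, Finset.card_univ, smul_eq_mul, hRc]
  have hNle : N.rank ≤ (tropMat A B θ).rank := by
    rw [hN]
    exact Matrix.rank_mul_le_left _ _
  have hlow : A.rank * B.rank ≤ (tropMat A B θ).rank := by
    calc A.rank * B.rank = Rc * A.rank := by rw [hBrank, hRc, Nat.mul_comm]
      _ = Fintype.card T := hcardT.symm
      _ = N.rank := hNrank.symm
      _ ≤ _ := hNle
  exact le_antisymm hlow hupper
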